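/- (Rademacher weights.) Let W_1,…,W_n be i.i.d. random variables with P(W_i = 0) = P(W_i = 2) = 1/2. For a subset Λ ⊆ {1,…,n} with card(Λ) = m ≥ 1, any i ∈ Λ, and W̄ := m^{−1} Σ_{j∈Λ} W_j, the quantity R₂(m) := E[(W_i − W̄)²/W̄ | W̄ > 0] converges to 1 as m → ∞; more precisely R₂(m) = 2 − 1/(1 − 2^{−m}). -/

import Mathlib

open MeasureTheory ProbabilityTheory Finset Filter

section Aux

lemma key_binom (m : ℕ) (hm : 1 ≤ m) :
    ∑ k ∈ Finset.range m, ((m-1).choose k : ℝ) *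
      (2*k/m + 2*((m:ℝ)-k-1)^2/(m*(k+1))) = 2^m - 2 := by
  have hm0 : (m:ℝ) ≠ 0 := Nat.cast_ne_zero.2 (by omega)
  set B : ℕ → ℝ := fun j => 2/m * ((m-1).choose j : ℝ) * ((m:ℝ) - j) with hB
  have hterm : ∀ k ∈ range m, ((m-1).choose k : ℝ) * (2*((m:ℝ)-k-1)^2/(m*(k+1))) = B (k+1) := by
    intro k hk
    rw [mem_range] at hk
    have hc : (((m-1).choose (k+1) : ℕ) : ℝ) * (k+1) = ((m-1).choose k : ℝ) * ((m:ℝ)-1-k) := by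
      have := Nat.choose_succ_right_eq (m-1) k
      have hle : k ≤ m - 1 := by omega
      have : (((m-1).choose (k+1) * (k+1) : ℕ) : ℝ) = (((m-1).choose k * (m-1-k) : ℕ) : ℝ) := by
        exact_mod_cast congrArg (Nat.cast (R := ℝ)) this
      push_cast [Nat.cast_sub hle, Nat.cast_sub hm] at this
      linarith [this]
    have hk1 : ((k:ℝ)+1) ≠ 0 := by positivity
    have hc' : (((m-1).choose (k+1) : ℕ) : ℝ) = ((m-1).choose k : ℝ) * ((m:ℝ)-1-k) / ((k:ℝ)+1) := by
      field_simp
      linarith [hc]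
    rw [hB]
    simp only [Nat.cast_add, Nat.cast_one]
    rw [hc']
    field_simp
    ring
  rw [Finset.sum_congr rfl (fun k hk => by rw [mul_add, hterm k hk])]
  rw [Finset.sum_add_distrib]
  have h2 : ∑ k ∈ range m, B (k+1) = (∑ k ∈ range m, B k) - 2 := by
    have := Finset.sum_range_succ' B m
    have hBm : B m = 0 := by simp [hB]
    have hB0 : B 0 = 2 := by
      simp [hB]
      field_simp
    rw [Finset.sum_range_succ] at this
    rw [hBm] at this
    linarith [this]
  rw [h2]
  have h3 : (∑ k ∈ range m, ((m-1).choose k : ℝ) * (2*k/m)) + (∑ k ∈ range m, B k)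
      = 2 * 2^(m-1) := by
    rw [← Finset.sum_add_distrib]
    have : ∀ k ∈ range m, ((m-1).choose k : ℝ) * (2*k/m) + B k = 2 * ((m-1).choose k : ℝ) := by
      intro k hk
      rw [hB]
      field_simp
      ring
    rw [Finset.sum_congr rfl this, ← Finset.mul_sum]
    have : ∑ k ∈ range m, ((m-1).choose k : ℝ) = 2^(m-1) := by
      have := Nat.sum_range_choose (m-1)
      have hmm : m - 1 + 1 = m := by omega
      rw [hmm] at this
      exact_mod_cast congrArg (Nat.cast (R := ℝ)) this
    rw [this]
  have h4 : (2:ℝ) * 2^(m-1) = 2^m := by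
    rw [← pow_succ']
    congr 1
    omega
  linarith [h3, h4]

lemma sum_boolfun_eq_sum_finset {α : Type*} [Fintype α] [DecidableEq α] (G : Finset α → ℝ) :
    ∑ a : α → Bool, G (Finset.univ.filter fun j => a j) = ∑ t : Finset α, G t := by
  apply Fintype.sum_bijective (fun a : α → Bool => Finset.univ.filter fun j => a j)
  · constructor
    · intro a b h
      funext j
      have := congrArg (fun s => j ∈ s) h
      simpa using this
    · intro t
      refine ⟨fun j => j ∈ t, ?_⟩
      ext j
      simp
  · intro a; rfl

lemma inner_count {α : Type*} [Fintype α] [DecidableEq α] (m : ℕ) (hcard : Fintype.card α = m) :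
    ∑ a : α → Bool, (if 0 < #(Finset.univ.filter fun j => a j) then (1:ℝ) else 0)
      = 2^m - 1 := by
  have key : ∀ a : α → Bool,
      (if 0 < #(Finset.univ.filter fun j => a j) then (1:ℝ) else 0)
        = 1 - (if a = (fun _ => false) then 1 else 0) := by
    intro a
    by_cases h : a = (fun _ => false)
    · subst h; simp
    · have : 0 < #(Finset.univ.filter fun j => a j) := by
        rw [Finset.card_pos, Finset.filter_nonempty_iff]
        by_contra hc
        push_neg at hc
        exact h (funext fun j => by simpa using hc j (mem_univ j))
      simp [this, h]
  rw [Finset.sum_congr rfl (fun a _ => key a), Finset.sum_sub_distrib]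
  rw [Finset.sum_const, Finset.sum_ite_eq' Finset.univ (fun _ => false) (fun _ => (1:ℝ))]
  simp [Fintype.card_fun, hcard]

lemma inner_main {α : Type*} [Fintype α] [DecidableEq α] (i₀ : α) (m : ℕ)
    (hcard : Fintype.card α = m) (hm : 1 ≤ m) :
    ∑ a : α → Bool, (if 0 < #(Finset.univ.filter fun j => a j) then
        ((if a i₀ then (2:ℝ) else 0) - 2*#(Finset.univ.filter fun j => a j)/m)^2
          / (2*#(Finset.univ.filter fun j => a j)/m) else 0)
      = 2^m - 2 := by
  have hm0 : (m:ℝ) ≠ 0 := Nat.cast_ne_zero.2 (by omega)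
  set G : Finset α → ℝ := fun t => if 0 < #t then
      ((if i₀ ∈ t then (2:ℝ) else 0) - 2*#t/m)^2 / (2*#t/m) else 0 with hG
  have step1 : ∀ a : α → Bool,
      (if 0 < #(Finset.univ.filter fun j => a j) then
        ((if a i₀ then (2:ℝ) else 0) - 2*#(Finset.univ.filter fun j => a j)/m)^2
          / (2*#(Finset.univ.filter fun j => a j)/m) else 0)
        = G (Finset.univ.filter fun j => a j) := by
    intro a
    have : (if a i₀ then (2:ℝ) else 0)
        = (if i₀ ∈ Finset.univ.filter (fun j => a j) then (2:ℝ) else 0) := by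
      by_cases h : a i₀ <;> simp [h]
    rw [hG]
    simp only [this]
  rw [Finset.sum_congr rfl (fun a _ => step1 a), sum_boolfun_eq_sum_finset]
  rw [← Finset.powerset_univ]
  have huniv : (Finset.univ : Finset α) = insert i₀ (Finset.univ.erase i₀) :=
    (Finset.insert_erase (mem_univ i₀)).symm
  rw [huniv, Finset.sum_powerset_insert (Finset.notMem_erase i₀ Finset.univ)]
  set E := (Finset.univ : Finset α).erase i₀ with hE
  have hEcard : #E = m - 1 := by
    rw [hE, Finset.card_erase_of_mem (mem_univ i₀), Finset.card_univ, hcard]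
  have hG1 : ∀ t ∈ E.powerset, G t = 2*#t/m := by
    intro t ht
    have hi : i₀ ∉ t := fun h =>
      Finset.notMem_erase i₀ Finset.univ (Finset.mem_powerset.1 ht h)
    rw [hG]
    by_cases h0 : #t = 0
    · simp [h0, hi]
    · have hpos : 0 < #t := Nat.pos_of_ne_zero h0
      have hx : (2*(#t:ℝ)/m) ≠ 0 := by
        have : (0:ℝ) < #t := by exact_mod_cast hpos
        exact div_ne_zero (mul_ne_zero two_ne_zero this.ne') hm0
      have hts : ((#t:ℕ):ℝ) ≠ 0 := Nat.cast_ne_zero.2 h0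
      simp only [hpos, if_true, hi, if_neg, if_false]
      rw [zero_sub, neg_sq]
      rw [sq, mul_div_assoc, div_self hx, mul_one]
  have hG2 : ∀ t ∈ E.powerset, G (insert i₀ t)
      = 2*((m:ℝ)-#t-1)^2/(m*(#t+1)) := by
    intro t ht
    have hi : i₀ ∉ t := fun h =>
      Finset.notMem_erase i₀ Finset.univ (Finset.mem_powerset.1 ht h)
    have hcardins : #(insert i₀ t) = #t + 1 := Finset.card_insert_of_notMem hi
    rw [hG]
    have hpos : 0 < #(insert i₀ t) := by omega
    have hk1 : ((#t:ℝ)+1) ≠ 0 := (Nat.cast_add_one_pos _).ne'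
    simp only [hpos, if_true, Finset.mem_insert_self, if_pos, hcardins]
    rw [if_pos (Nat.succ_pos #t)]
    push_cast
    field_simp
    ring
  rw [Finset.sum_congr rfl hG1, Finset.sum_congr rfl hG2]
  have := Finset.sum_powerset E (fun t => 2*(#t:ℝ)/m + 2*((m:ℝ)-#t-1)^2/(m*(#t+1)))
  rw [← Finset.sum_add_distrib, this, hEcard]
  have hm1 : m - 1 + 1 = m := by omega
  rw [hm1]
  rw [← key_binom m hm]
  apply Finset.sum_congr rfl
  intro k hk
  have hinner : ∀ t ∈ Finset.powersetCard k E, (2*(#t:ℝ)/m + 2*((m:ℝ)-#t-1)^2/(m*(#t+1)))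
      = (2*(k:ℝ)/m + 2*((m:ℝ)-k-1)^2/(m*(k+1))) := by
    intro t ht
    rw [(Finset.mem_powersetCard.1 ht).2]
  rw [Finset.sum_congr rfl hinner, Finset.sum_const, Finset.card_powersetCard, hEcard]
  rw [nsmul_eq_mul]

lemma sum_split {n : ℕ} (Λ : Finset (Fin n)) (Φ : ({x // x ∈ Λ} → Bool) → ℝ) :
    ∑ u : Fin n → Bool, Φ (fun j => u j.1) = 2 ^ (n - Λ.card) * ∑ a : {x // x ∈ Λ} → Bool, Φ a := by
  have h := Equiv.sum_comp (Equiv.piEquivPiSubtypeProd (fun j : Fin n => j ∈ Λ) fun _ => Bool)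
      (fun p : ({x // x ∈ Λ} → Bool) × ({x // ¬ x ∈ Λ} → Bool) => Φ p.1)
  have hL : ∑ u : Fin n → Bool,
      (fun p : ({x // x ∈ Λ} → Bool) × ({x // ¬ x ∈ Λ} → Bool) => Φ p.1)
        ((Equiv.piEquivPiSubtypeProd (fun j : Fin n => j ∈ Λ) fun _ => Bool) u)
      = ∑ u : Fin n → Bool, Φ (fun j => u j.1) := rfl
  rw [hL] at h
  rw [h, Fintype.sum_prod_type]
  have hcard : Fintype.card ({x : Fin n // ¬ x ∈ Λ} → Bool) = 2 ^ (n - Λ.card) := by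
    rw [Fintype.card_fun, Fintype.card_bool, Fintype.card_subtype_compl, Fintype.card_fin,
      Fintype.card_coe]
  rw [Finset.mul_sum]
  apply Finset.sum_congr rfl
  intro a _
  have hc : (∑ y : {x : Fin n // ¬ x ∈ Λ} → Bool, Φ (a, y).1)
      = ∑ _y : {x : Fin n // ¬ x ∈ Λ} → Bool, Φ a := rfl
  rw [hc, Finset.sum_const, Finset.card_univ, hcard, nsmul_eq_mul]
  push_cast
  ring

end Aux

/-- uniform probability measure on a finite type. -/
noncomputable def unifM (α : Type*) [Fintype α] [MeasurableSpace α] : Measure α :=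
  (Fintype.card α : ENNReal)⁻¹ • Measure.count

/-- Rademacher resampling weights as a function of `u : Fin n → Bool` (uniform, i.e. the
`W_i` are i.i.d. with `P(W_i = 0) = P(W_i = 2) = 1/2`). -/
noncomputable def radW (n : ℕ) (i : Fin n) (u : Fin n → Bool) : ℝ :=
  if u i then 2 else 0

/-- **`R₂(m)` for Rademacher weights**: for any cell `Λ` of cardinality `m ≥ 1` and `i ∈ Λ`,
with `W̄ = m⁻¹ Σ_{j∈Λ} W_j`, the quantity `R₂(m) = E[(W_i − W̄)²/W̄ | W̄ > 0]` equals
`2 − 1/(1 − 2⁻ᵐ)`, and it converges to `1` as `m → ∞`. -/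
theorem rademacher_R2 (n : ℕ) (hn : 1 ≤ n)
    (Λ : Finset (Fin n)) (m : ℕ) (hm : Λ.card = m) (hm1 : 1 ≤ m) (i : Fin n) (hi : i ∈ Λ) :
    (∫ u, (radW n i u - (∑ j ∈ Λ, radW n j u) / m) ^ 2 /
          ((∑ j ∈ Λ, radW n j u) / m)
        ∂((unifM (Fin n → Bool))[|{u | 0 < (∑ j ∈ Λ, radW n j u) / m}]) =
        2 - 1 / (1 - ((2 : ℝ) ^ m)⁻¹)) ∧
      Tendsto (fun m : ℕ => 2 - 1 / (1 - ((2 : ℝ) ^ m)⁻¹)) atTop (nhds 1) := by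
  classical
  constructor
  · set s : Set (Fin n → Bool) := {u | 0 < (∑ j ∈ Λ, radW n j u) / m} with hs
    set f : (Fin n → Bool) → ℝ := fun u =>
      (radW n i u - (∑ j ∈ Λ, radW n j u) / m) ^ 2 / ((∑ j ∈ Λ, radW n j u) / m) with hf
    have hmR : (0:ℝ) < m := by exact_mod_cast hm1
    have hcardα : Fintype.card {x // x ∈ Λ} = m := by rw [Fintype.card_coe, hm]
    -- the sum of weights
    have hsum : ∀ u : Fin n → Bool,
        (∑ j ∈ Λ, radW n j u)
          = 2 * ((#(Finset.univ.filter fun j : {x // x ∈ Λ} => u j.1) : ℕ) : ℝ) := by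
      intro u
      rw [← Finset.sum_attach Λ (fun j => radW n j u), ← Finset.univ_eq_attach]
      have h1 : ∀ j : {x // x ∈ Λ}, radW n j.1 u
          = 2 * (if u j.1 then (1:ℝ) else 0) := by
        intro j
        by_cases h : u j.1 <;> simp [radW, h]
      rw [Finset.sum_congr rfl (fun j _ => h1 j), ← Finset.mul_sum, Finset.sum_boole]
    -- membership in s
    have hmemb : ∀ u : Fin n → Bool,
        u ∈ s ↔ 0 < #(Finset.univ.filter fun j : {x // x ∈ Λ} => u j.1) := by
      intro u
      rw [hs, Set.mem_setOf_eq, hsum u]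
      constructor
      · intro h
        by_contra h0
        push_neg at h0
        have hz : #(Finset.univ.filter fun j : {x // x ∈ Λ} => u j.1) = 0 := by omega
        rw [hz] at h
        norm_num at h
      · intro h
        have : (0:ℝ) < ((#(Finset.univ.filter fun j : {x // x ∈ Λ} => u j.1) : ℕ) : ℝ) := by
          exact_mod_cast h
        positivity
    -- finiteness and cardinality of s
    have hsfin : s.Finite := Set.toFinite s
    have hsfinset : hsfin.toFinset = Finset.univ.filter (fun u => u ∈ s) := by
      ext u
      simp only [Set.Finite.mem_toFinset, Finset.mem_filter, Finset.mem_univ, true_and]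
    set N : ℕ := #(hsfin.toFinset) with hN
    have hcount : Measure.count s = (N : ENNReal) :=
      Measure.count_apply_finite s hsfin
    have hNval : (N:ℝ) = 2^(n-m) * (2^m - 1) := by
      have h1 : ((N:ℕ):ℝ) = ∑ u : Fin n → Bool, (if u ∈ s then (1:ℝ) else 0) := by
        rw [Finset.sum_boole, hN, hsfinset]
      have h2 : ∀ u : Fin n → Bool, (if u ∈ s then (1:ℝ) else 0)
          = (fun a : {x // x ∈ Λ} → Bool =>
              if 0 < #(Finset.univ.filter fun j => a j) then (1:ℝ) else 0)
            (fun j => u j.1) := by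
        intro u
        simp only
        exact if_congr (hmemb u) rfl rfl
      rw [h1, Finset.sum_congr rfl (fun u _ => h2 u),
        sum_split Λ (fun a : {x // x ∈ Λ} → Bool =>
          if 0 < #(Finset.univ.filter fun j => a j) then (1:ℝ) else 0),
        inner_count m hcardα, hm]
    have hNpos : (0:ℝ) < (N:ℝ) := by
      rw [hNval]
      have h2m : (2:ℝ) ≤ 2^m := by
        calc (2:ℝ) = 2^1 := by norm_num
        _ ≤ 2^m := pow_le_pow_right₀ (by norm_num) hm1
      have : (1:ℝ) ≤ 2^m - 1 := by linarith
      positivity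
    have hNne : N ≠ 0 := by
      intro h
      rw [h] at hNpos
      norm_num at hNpos
    -- measure of s
    have hcardΩ : (Fintype.card (Fin n → Bool)) = 2^n := by
      rw [Fintype.card_fun, Fintype.card_bool, Fintype.card_fin]
    have hμdef : unifM (Fin n → Bool) = ((2^n : ℕ) : ENNReal)⁻¹ • Measure.count := by
      rw [unifM, hcardΩ]
    have hμs : (unifM (Fin n → Bool)) s = ((2^n : ℕ) : ENNReal)⁻¹ * (N : ENNReal) := by
      rw [hμdef, Measure.smul_apply, smul_eq_mul, hcount]
    -- the restricted integral
    have hrestrict : ∀ u : Fin n → Bool,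
        ((Measure.count.restrict s) {u}).toReal = if u ∈ s then (1:ℝ) else 0 := by
      intro u
      rw [Measure.restrict_apply (measurableSet_singleton u)]
      by_cases h : u ∈ s
      · rw [Set.inter_eq_self_of_subset_left (Set.singleton_subset_iff.2 h),
          Measure.count_singleton]
        simp [h]
      · have hemp : ({u} : Set (Fin n → Bool)) ∩ s = ∅ := by
          apply Set.eq_empty_iff_forall_notMem.2
          intro v hv
          rcases hv with ⟨hv1, hv2⟩
          rw [Set.mem_singleton_iff] at hv1
          exact h (hv1 ▸ hv2)
        rw [hemp]
        simp [h]
    have hint : ∫ u, f u ∂(Measure.count.restrict s)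
        = ∑ u : Fin n → Bool, (if u ∈ s then f u else 0) := by
      rw [MeasureTheory.integral_fintype Integrable.of_finite]
      apply Finset.sum_congr rfl
      intro u _
      rw [measureReal_def, hrestrict u, smul_eq_mul]
      by_cases h : u ∈ s <;> simp [h]
    have hTval : ∑ u : Fin n → Bool, (if u ∈ s then f u else 0)
        = 2^(n-m) * (2^m - 2) := by
      have h2 : ∀ u : Fin n → Bool, (if u ∈ s then f u else 0)
          = (fun a : {x // x ∈ Λ} → Bool =>
              if 0 < #(Finset.univ.filter fun j => a j) then
                ((if a ⟨i, hi⟩ then (2:ℝ) else 0) - 2*#(Finset.univ.filter fun j => a j)/m)^2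
                  / (2*#(Finset.univ.filter fun j => a j)/m) else 0) (fun j => u j.1) := by
        intro u
        simp only
        refine if_congr (hmemb u) ?_ rfl
        rw [hf]
        simp only
        rw [hsum u]
        rfl
      rw [Finset.sum_congr rfl (fun u _ => h2 u),
        sum_split Λ (fun a : {x // x ∈ Λ} → Bool =>
          if 0 < #(Finset.univ.filter fun j => a j) then
            ((if a ⟨i, hi⟩ then (2:ℝ) else 0) - 2*#(Finset.univ.filter fun j => a j)/m)^2
              / (2*#(Finset.univ.filter fun j => a j)/m) else 0),
        inner_main (⟨i, hi⟩ : {x // x ∈ Λ}) m hcardα hm1, hm]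
    -- assembling
    have hcond : (unifM (Fin n → Bool))[|s]
        = ((unifM (Fin n → Bool)) s)⁻¹ • (unifM (Fin n → Bool)).restrict s := rfl
    rw [hcond, hμs, integral_smul_measure, hμdef, Measure.restrict_smul,
      integral_smul_measure, hint, hTval]
    simp only [ENNReal.toReal_inv, ENNReal.toReal_mul, ENNReal.toReal_natCast, smul_eq_mul]
    rw [hNval]
    have hc1 : ((2^n : ℕ) : ℝ) = 2^n := by push_cast; ring
    rw [hc1]
    have h2m : (2:ℝ) ≤ 2^m := by
      calc (2:ℝ) = 2^1 := by norm_num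
      _ ≤ 2^m := pow_le_pow_right₀ (by norm_num) hm1
    have hne1 : (2:ℝ)^m - 1 ≠ 0 := by linarith
    have hne2 : (2:ℝ)^n ≠ 0 := by positivity
    have hne3 : (2:ℝ)^(n-m) ≠ 0 := by positivity
    have hne4 : (2:ℝ)^m ≠ 0 := by positivity
    have hne5 : 1 - ((2:ℝ)^m)⁻¹ ≠ 0 := by
      have hx : ((2:ℝ)^m)⁻¹ ≤ 2⁻¹ := inv_anti₀ (by norm_num) h2m
      intro h
      rw [sub_eq_zero] at h
      rw [← h] at hx
      norm_num at hx
    field_simp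
    ring
  · have h1 : Tendsto (fun m : ℕ => ((2:ℝ)^m)⁻¹) atTop (nhds 0) := by
      have h : (fun m : ℕ => ((2:ℝ)^m)⁻¹) = fun m : ℕ => ((2:ℝ)⁻¹)^m := by
        funext m; rw [inv_pow]
      rw [h]
      exact tendsto_pow_atTop_nhds_zero_of_lt_one (by norm_num) (by norm_num)
    have h2 : Tendsto (fun m : ℕ => 1 - ((2:ℝ)^m)⁻¹) atTop (nhds 1) := by
      have := (tendsto_const_nhds : Tendsto (fun _ : ℕ => (1:ℝ)) atTop (nhds 1)).sub h1
      simpa using this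
    have h3 : Tendsto (fun m : ℕ => (1 - ((2:ℝ)^m)⁻¹)⁻¹) atTop (nhds 1) := by
      have := h2.inv₀ (by norm_num)
      simpa using this
    have h4 := (tendsto_const_nhds : Tendsto (fun _ : ℕ => (2:ℝ)) atTop (nhds 2)).sub h3
    have h5 : (2:ℝ) - 1 = 1 := by norm_num
    rw [h5] at h4
    simpa [one_div] using h4
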